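/- arXiv:2101.02955 — 2 statements merged into one kernel-verified Lean document; each statement's English description precedes it below -/
import Mathlib

section
/- Let n ≥ 1 and let g₁, g₂ : ℝⁿ → (real symmetric positive definite n×n matrices) be of class C¹. Let φ₁, φ₂ : ℝⁿ → ℝ be of class C² satisfying the eikonal equations |∇φ₁|²_{g₁}(x) = 1 and |∇φ₂|²_{g₂}(x) = 1 for all x. Write s^{jk}(x) = g₂^{jk}(x) − g₁^{jk}(x) for the entries of g₂(x)⁻¹ − g₁(x)⁻¹. Let h > 0 and define m(x) = −(i/2) e^{i(φ₁(x)−φ₂(x))/h} Σ_{j,k=1}^n s^{jk}(x) ∂_{x_j}φ₁(x) ∂_{x_k}φ₁(x). Let a₂ : ℝ × ℝⁿ → ℂ be of class C² satisfying L_{g₁,φ₁} a₂ = 0 everywhere, and let a₃ : ℝ × ℝⁿ → ℂ be of class C² satisfying L_{g₂,φ₂} a₃(t,x) = a₂(t,x) m(x) everywhere. Then for every (t,x): (∂_t² − Δ_{g₂})( h a₂(t,x) e^{i(φ₁(x)−t)/h} + a₃(t,x) e^{i(φ₂(x)−t)/h} ) = e^{i(φ₁(x)−t)/h} [ h (∂_t²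 − Δ_{g₂})a₂(t,x) − 2i Σ_{j,k=1}^n s^{jk}(x) ∂_{x_j}φ₁(x) ∂_{x_k}a₂(t,x) − i (Δ_{g₂}φ₁(x) − Δ_{g₁}φ₁(x)) a₂(t,x) ] + e^{i(φ₂(x)−t)/h} (∂_t² − Δ_{g₂})a₃(t,x). -/
noncomputable section

open Complex

/-- Partial derivative of a real-valued function on `ℝⁿ` in the `j`-th coordinate. -/
def pdR (n : ℕ) (j : Fin n) (f : (Fin n → ℝ) → ℝ) (x : Fin n → ℝ) : ℝ :=
  fderiv ℝ f x (Pi.single j 1)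

/-- Partial derivative of a complex-valued function on `ℝⁿ` in the `j`-th coordinate. -/
def pdC (n : ℕ) (j : Fin n) (f : (Fin n → ℝ) → ℂ) (x : Fin n → ℝ) : ℂ :=
  fderiv ℝ f x (Pi.single j 1)

/-- Laplace–Beltrami operator in coordinates, acting on complex-valued functions. -/
def laplC (n : ℕ) (g : (Fin n → ℝ) → Matrix (Fin n) (Fin n) ℝ)
    (u : (Fin n → ℝ) → ℂ) (x : Fin n → ℝ) : ℂ :=
  ((Real.sqrt (g x).det : ℝ) : ℂ)⁻¹ *
    ∑ j, pdC n j (fun y => ((Real.sqrt (g y).det : ℝ) : ℂ) *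
      ∑ k, (((g y)⁻¹ j k : ℝ) : ℂ) * pdC n k u y) x

/-- Laplace–Beltrami operator in coordinates, acting on real-valued functions. -/
def laplR (n : ℕ) (g : (Fin n → ℝ) → Matrix (Fin n) (Fin n) ℝ)
    (u : (Fin n → ℝ) → ℝ) (x : Fin n → ℝ) : ℝ :=
  (Real.sqrt (g x).det)⁻¹ *
    ∑ j, pdR n j (fun y => Real.sqrt (g y).det *
      ∑ k, (g y)⁻¹ j k * pdR n k u y) x

/-- Time derivative of a function of `(t, x)`. -/
def dt1 (n : ℕ) (a : ℝ × (Fin n → ℝ) → ℂ) (t : ℝ) (x : Fin n → ℝ) : ℂ :=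
  deriv (fun s => a (s, x)) t

/-- Second time derivative of a function of `(t, x)`. -/
def dt2 (n : ℕ) (a : ℝ × (Fin n → ℝ) → ℂ) (t : ℝ) (x : Fin n → ℝ) : ℂ :=
  deriv (fun s => dt1 n a s x) t

/-- The wave operator `∂_t² − Δ_g`. -/
def waveOp (n : ℕ) (g : (Fin n → ℝ) → Matrix (Fin n) (Fin n) ℝ)
    (a : ℝ × (Fin n → ℝ) → ℂ) (t : ℝ) (x : Fin n → ℝ) : ℂ :=
  dt2 n a t x - laplC n g (fun y => a (t, y)) x

/-- `⟨∇φ, ∇a(t,·)⟩_g`. -/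
def gradInnerC (n : ℕ) (g : (Fin n → ℝ) → Matrix (Fin n) (Fin n) ℝ)
    (φ : (Fin n → ℝ) → ℝ) (a : ℝ × (Fin n → ℝ) → ℂ) (t : ℝ) (x : Fin n → ℝ) : ℂ :=
  ∑ j, ∑ k, (((g x)⁻¹ j k * pdR n j φ x : ℝ) : ℂ) * pdC n k (fun y => a (t, y)) x

/-- `|∇φ|²_g`. -/
def gradNormSq (n : ℕ) (g : (Fin n → ℝ) → Matrix (Fin n) (Fin n) ℝ)
    (φ : (Fin n → ℝ) → ℝ) (x : Fin n → ℝ) : ℝ :=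
  ∑ j, ∑ k, (g x)⁻¹ j k * pdR n j φ x * pdR n k φ x

/-- The transport operator `L_{g,φ} a = ∂_t a + ⟨∇φ, ∇a⟩_g + (1/2)(Δ_g φ)·a`. -/
def transport (n : ℕ) (g : (Fin n → ℝ) → Matrix (Fin n) (Fin n) ℝ)
    (φ : (Fin n → ℝ) → ℝ) (a : ℝ × (Fin n → ℝ) → ℂ) (t : ℝ) (x : Fin n → ℝ) : ℂ :=
  dt1 n a t x + gradInnerC n g φ a t x + (1 / 2 : ℂ) * (laplR n g φ x : ℂ) * a (t, x)

namespace WKB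

variable {n : ℕ}

/-- complex flux -/
def fluxC (n : ℕ) (g : (Fin n → ℝ) → Matrix (Fin n) (Fin n) ℝ)
    (u : (Fin n → ℝ) → ℂ) (j : Fin n) : (Fin n → ℝ) → ℂ :=
  fun y => ((Real.sqrt (g y).det : ℝ) : ℂ) * ∑ k, (((g y)⁻¹ j k : ℝ) : ℂ) * pdC n k u y

/-- real flux -/
def fluxR (n : ℕ) (g : (Fin n → ℝ) → Matrix (Fin n) (Fin n) ℝ)
    (φ : (Fin n → ℝ) → ℝ) (j : Fin n) : (Fin n → ℝ) → ℝ :=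
  fun y => Real.sqrt (g y).det * ∑ k, (g y)⁻¹ j k * pdR n k φ y

lemma laplC_eq (g : (Fin n → ℝ) → Matrix (Fin n) (Fin n) ℝ) (u : (Fin n → ℝ) → ℂ)
    (x : Fin n → ℝ) :
    laplC n g u x = ((Real.sqrt (g x).det : ℝ) : ℂ)⁻¹ * ∑ j, pdC n j (fluxC n g u j) x := rfl

lemma laplR_eq (g : (Fin n → ℝ) → Matrix (Fin n) (Fin n) ℝ) (φ : (Fin n → ℝ) → ℝ)
    (x : Fin n → ℝ) :
    laplR n g φ x = (Real.sqrt (g x).det)⁻¹ * ∑ j, pdR n j (fluxR n g φ j) x := rfl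



variable {n : ℕ} {x : Fin n → ℝ} {j : Fin n}

lemma pdC_add {f g : (Fin n → ℝ) → ℂ} (hf : DifferentiableAt ℝ f x)
    (hg : DifferentiableAt ℝ g x) :
    pdC n j (fun y => f y + g y) x = pdC n j f x + pdC n j g x := by
  unfold pdC; rw [fderiv_fun_add hf hg]; rfl

lemma pdC_const_mul {f : (Fin n → ℝ) → ℂ} (c : ℂ) (hf : DifferentiableAt ℝ f x) :
    pdC n j (fun y => c * f y) x = c * pdC n j f x := by
  unfold pdC; rw [fderiv_const_mul hf]; rfl

lemma pdC_mul {f g : (Fin n → ℝ) → ℂ} (hf : DifferentiableAt ℝ f x)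
    (hg : DifferentiableAt ℝ g x) :
    pdC n j (fun y => f y * g y) x = pdC n j f x * g x + f x * pdC n j g x := by
  unfold pdC; rw [fderiv_fun_mul hf hg]; simp [smul_eq_mul]; ring

lemma pdC_sum {ι : Type*} (s : Finset ι) {f : ι → (Fin n → ℝ) → ℂ}
    (hf : ∀ i ∈ s, DifferentiableAt ℝ (f i) x) :
    pdC n j (fun y => ∑ i ∈ s, f i y) x = ∑ i ∈ s, pdC n j (f i) x := by
  unfold pdC; rw [fderiv_fun_sum hf]; simp

lemma pdC_ofReal {f : (Fin n → ℝ) → ℝ} (hf : DifferentiableAt ℝ f x) :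
    pdC n j (fun y => ((f y : ℝ) : ℂ)) x = ((pdR n j f x : ℝ) : ℂ) := by
  unfold pdC pdR
  have : fderiv ℝ (fun y => ((f y : ℝ) : ℂ)) x
      = Complex.ofRealCLM.comp (fderiv ℝ f x) :=
    (Complex.ofRealCLM.hasFDerivAt.comp x hf.hasFDerivAt).fderiv
  rw [this]; rfl



variable {n : ℕ}

lemma contDiff_det {g : (Fin n → ℝ) → Matrix (Fin n) (Fin n) ℝ}
    (hg : ∀ j k, ContDiff ℝ 1 (fun x => g x j k)) :
    ContDiff ℝ 1 (fun x => (g x).det) := by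
  have : (fun x => (g x).det)
      = fun x => ∑ σ : Equiv.Perm (Fin n),
          (((Equiv.Perm.sign σ : ℤ) : ℝ)) * ∏ i, g x (σ i) i := by
    funext x; rw [Matrix.det_apply]
    refine Finset.sum_congr rfl fun σ _ => ?_
    rw [Units.smul_def, zsmul_eq_mul]
  rw [this]
  refine ContDiff.sum fun σ _ => ?_
  exact contDiff_const.mul (contDiff_prod (fun i _ => hg (σ i) i))

lemma contDiff_adjugate {g : (Fin n → ℝ) → Matrix (Fin n) (Fin n) ℝ}
    (hg : ∀ j k, ContDiff ℝ 1 (fun x => g x j k)) (i j : Fin n) :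
    ContDiff ℝ 1 (fun x => (g x).adjugate i j) := by
  have : (fun x => (g x).adjugate i j)
      = fun x => ((g x).updateRow j (Pi.single i 1)).det := by
    funext x; rw [Matrix.adjugate_apply]
  rw [this]
  refine contDiff_det (fun p q => ?_)
  by_cases hp : p = j
  · subst hp; simp [Matrix.updateRow_apply]; exact contDiff_const
  · simp [Matrix.updateRow_apply, hp]; exact hg p q

lemma differentiable_inv_entry {g : (Fin n → ℝ) → Matrix (Fin n) (Fin n) ℝ}
    (hg : ∀ j k, ContDiff ℝ 1 (fun x => g x j k))
    (hpos : ∀ x, (g x).PosDef) (i j : Fin n) :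
    Differentiable ℝ (fun x => (g x)⁻¹ i j) := by
  have hdet : ∀ x, (g x).det ≠ 0 := fun x => (hpos x).det_pos.ne'
  have : (fun x => (g x)⁻¹ i j) = fun x => ((g x).det)⁻¹ * (g x).adjugate i j := by
    funext x
    rw [Matrix.inv_def, Ring.inverse_eq_inv']
    simp [Matrix.smul_apply, smul_eq_mul]
  rw [this]
  exact (((contDiff_det hg).differentiable one_ne_zero).inv hdet).mul
    ((contDiff_adjugate hg i j).differentiable one_ne_zero)

lemma differentiable_sqrt_det {g : (Fin n → ℝ) → Matrix (Fin n) (Fin n) ℝ}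
    (hg : ∀ j k, ContDiff ℝ 1 (fun x => g x j k))
    (hpos : ∀ x, (g x).PosDef) :
    Differentiable ℝ (fun x => Real.sqrt (g x).det) := by
  intro x
  exact (Real.hasDerivAt_sqrt (hpos x).det_pos.ne').differentiableAt.comp x
    ((contDiff_det hg).differentiable one_ne_zero x)


variable {n : ℕ} {x : Fin n → ℝ} {k : Fin n}

lemma differentiable_pdC {u : (Fin n → ℝ) → ℂ} (hu : ContDiff ℝ 2 u) (k : Fin n) :
    Differentiable ℝ (pdC n k u) := by
  have : ContDiff ℝ 1 (pdC n k u) := by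
    have h1 : ContDiff ℝ 1 (fderiv ℝ u) := hu.fderiv_right (by norm_num)
    exact h1.clm_apply contDiff_const
  exact this.differentiable one_ne_zero

lemma differentiable_pdR {u : (Fin n → ℝ) → ℝ} (hu : ContDiff ℝ 2 u) (k : Fin n) :
    Differentiable ℝ (pdR n k u) := by
  have : ContDiff ℝ 1 (pdR n k u) := by
    have h1 : ContDiff ℝ 1 (fderiv ℝ u) := hu.fderiv_right (by norm_num)
    exact h1.clm_apply contDiff_const
  exact this.differentiable one_ne_zero

lemma hasFDerivAt_phase {φ : (Fin n → ℝ) → ℝ} {φ' : (Fin n → ℝ) →L[ℝ] ℝ}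
    (hφ : HasFDerivAt φ φ' x) (c : ℂ) (h : ℝ) :
    HasFDerivAt (fun y => Complex.exp (Complex.I * ((φ y : ℂ) - c) / (h : ℂ)))
      ((Complex.exp (Complex.I * ((φ x : ℂ) - c) / (h : ℂ)) * (Complex.I / h)) •
        (Complex.ofRealCLM.comp φ')) x := by
  have h1 : HasFDerivAt (fun y => ((φ y : ℝ) : ℂ)) (Complex.ofRealCLM.comp φ') x :=
    Complex.ofRealCLM.hasFDerivAt.comp x hφ
  have h2 : HasFDerivAt (fun y => Complex.I * ((φ y : ℂ) - c) / (h : ℂ))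
      ((Complex.I / h) • (Complex.ofRealCLM.comp φ')) x := by
    have h3 := (h1.const_mul (Complex.I / h)).sub_const (Complex.I * c / h)
    have : (fun y => Complex.I / (h:ℂ) * ((φ y : ℝ):ℂ) - Complex.I * c / h)
        = fun y => Complex.I * ((φ y : ℂ) - c) / (h : ℂ) := by
      funext y; ring
    rwa [this] at h3
  have := h2.cexp
  rw [smul_smul] at this; exact this

lemma pdC_phase {φ : (Fin n → ℝ) → ℝ} (hφ : DifferentiableAt ℝ φ x) (c : ℂ) (h : ℝ) :
    pdC n k (fun y => Complex.exp (Complex.I * ((φ y : ℂ) - c) / (h : ℂ))) x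
      = Complex.I / h * ((pdR n k φ x : ℝ) : ℂ) *
          Complex.exp (Complex.I * ((φ x : ℂ) - c) / (h : ℂ)) := by
  have := (hasFDerivAt_phase hφ.hasFDerivAt c h).fderiv
  unfold pdC pdR
  rw [this]
  simp [ContinuousLinearMap.smul_apply]
  ring

lemma differentiableAt_phase {φ : (Fin n → ℝ) → ℝ} (hφ : DifferentiableAt ℝ φ x)
    (c : ℂ) (h : ℝ) :
    DifferentiableAt ℝ (fun y => Complex.exp (Complex.I * ((φ y : ℂ) - c) / (h : ℂ))) x :=
  (hasFDerivAt_phase hφ.hasFDerivAt c h).differentiableAt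

lemma hasDerivAt_phase_t (c : ℝ) (h : ℝ) (t : ℝ) :
    HasDerivAt (fun s : ℝ => Complex.exp (Complex.I * ((c : ℂ) - (s : ℂ)) / (h : ℂ)))
      ((-Complex.I / h) * Complex.exp (Complex.I * ((c : ℂ) - (t : ℂ)) / (h : ℂ))) t := by
  have h1 : HasDerivAt (fun s : ℝ => ((s : ℝ) : ℂ)) 1 t := Complex.ofRealCLM.hasDerivAt
  have h2 : HasDerivAt (fun s : ℝ => Complex.I * ((c : ℂ) - (s : ℂ)) / (h : ℂ))
      (-Complex.I / h) t := by
    have h3 := ((h1.const_mul (-Complex.I / h)).add_const (Complex.I * c / h))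
    have : (fun s : ℝ => -Complex.I / (h:ℂ) * ((s:ℝ):ℂ) + Complex.I * c / h)
        = fun s : ℝ => Complex.I * ((c : ℂ) - (s : ℂ)) / (h : ℂ) := by
      funext s; ring
    rw [this] at h3
    simpa using h3
  have := h2.cexp
  convert this using 1
  ring



section Flux
variable {g : (Fin n → ℝ) → Matrix (Fin n) (Fin n) ℝ}

lemma differentiable_fluxC (hg : ∀ j k, ContDiff ℝ 1 (fun x => g x j k))
    (hpos : ∀ x, (g x).PosDef) {u : (Fin n → ℝ) → ℂ} (hu : ContDiff ℝ 2 u) (j : Fin n) :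
    Differentiable ℝ (fluxC n g u j) := by
  refine Differentiable.mul ?_ ?_
  · exact Complex.ofRealCLM.differentiable.comp (differentiable_sqrt_det hg hpos)
  · refine Differentiable.fun_sum fun k _ => Differentiable.mul ?_ (differentiable_pdC hu k)
    exact Complex.ofRealCLM.differentiable.comp (differentiable_inv_entry hg hpos j k)

lemma differentiable_fluxR (hg : ∀ j k, ContDiff ℝ 1 (fun x => g x j k))
    (hpos : ∀ x, (g x).PosDef) {φ : (Fin n → ℝ) → ℝ} (hφ : ContDiff ℝ 2 φ) (j : Fin n) :
    Differentiable ℝ (fluxR n g φ j) := by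
  refine Differentiable.mul (differentiable_sqrt_det hg hpos) ?_
  exact Differentiable.fun_sum fun k _ =>
    (differentiable_inv_entry hg hpos j k).mul (differentiable_pdR hφ k)

end Flux


section Spatial
variable {g : (Fin n → ℝ) → Matrix (Fin n) (Fin n) ℝ}

lemma inv_symm (hsymm : ∀ x, (g x).IsSymm) (x : Fin n → ℝ) (j k : Fin n) :
    (g x)⁻¹ j k = (g x)⁻¹ k j := by
  have h1 : ((g x)⁻¹).transpose = ((g x).transpose)⁻¹ := (g x).transpose_nonsing_inv
  have h2 : ((g x).transpose)⁻¹ = (g x)⁻¹ := by rw [(hsymm x).eq]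
  have := congrFun (congrFun (h1.trans h2) j) k
  simpa [Matrix.transpose_apply] using this.symm

lemma laplC_mul_phase
    (hg_symm : ∀ x, (g x).IsSymm) (hpos : ∀ x, (g x).PosDef)
    (hg : ∀ j k, ContDiff ℝ 1 (fun x => g x j k))
    {φ : (Fin n → ℝ) → ℝ} (hφ : ContDiff ℝ 2 φ)
    {u : (Fin n → ℝ) → ℂ} (hu : ContDiff ℝ 2 u)
    {h : ℝ} (hh : h ≠ 0) (c : ℂ) (x : Fin n → ℝ) :
    laplC n g (fun y => u y * Complex.exp (Complex.I * ((φ y : ℂ) - c) / (h : ℂ))) x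
      = Complex.exp (Complex.I * ((φ x : ℂ) - c) / (h : ℂ)) *
          (laplC n g u x
            + Complex.I / h *
                (2 * ∑ j, ∑ k, (((g x)⁻¹ j k * pdR n j φ x : ℝ) : ℂ) * pdC n k u x
                  + (laplR n g φ x : ℂ) * u x)
            - ((gradNormSq n g φ x : ℝ) : ℂ) / ((h : ℂ) ^ 2) * u x) := by
  have φdiff : Differentiable ℝ φ := hφ.differentiable two_ne_zero
  have udiff : Differentiable ℝ u := hu.differentiable two_ne_zero
  have pud : ∀ k, Differentiable ℝ (pdC n k u) := differentiable_pdC hu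
  have pφd : ∀ k, Differentiable ℝ (pdR n k φ) := differentiable_pdR hφ
  have Fd : ∀ j, Differentiable ℝ (fluxC n g u j) := differentiable_fluxC hg hpos hu
  have Pd : ∀ j, Differentiable ℝ (fluxR n g φ j) := differentiable_fluxR hg hpos hφ
  set e : (Fin n → ℝ) → ℂ :=
    fun y => Complex.exp (Complex.I * ((φ y : ℂ) - c) / (h : ℂ)) with he
  have ediff : Differentiable ℝ e := fun y => differentiableAt_phase (φdiff y) c h
  have epd : ∀ (k : Fin n) (y : Fin n → ℝ),
      pdC n k e y = Complex.I / h * ((pdR n k φ y : ℝ) : ℂ) * e y := by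
    intro k y; rw [he]; exact pdC_phase (φdiff y) c h
  -- step 0 : derivative of u * e
  have step0 : ∀ (k : Fin n) (y : Fin n → ℝ), pdC n k (fun z => u z * e z) y
      = (pdC n k u y + Complex.I / h * ((pdR n k φ y : ℝ) : ℂ) * u y) * e y := by
    intro k y
    rw [pdC_mul (udiff y) (ediff y), epd k y]
    ring
  -- step 1 : the complex flux of u * e
  have step1 : ∀ (j : Fin n) (y : Fin n → ℝ),
      fluxC n g (fun z => u z * e z) j y
        = (fluxC n g u j y + Complex.I / h * (((fluxR n g φ j y : ℝ) : ℂ) * u y)) * e y := by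
    intro j y
    show ((Real.sqrt (g y).det : ℝ) : ℂ) * ∑ k, (((g y)⁻¹ j k : ℝ) : ℂ) *
        pdC n k (fun z => u z * e z) y = _
    have hsum : ∀ k : Fin n, (((g y)⁻¹ j k : ℝ) : ℂ) * pdC n k (fun z => u z * e z) y
        = ((((g y)⁻¹ j k : ℝ) : ℂ) * pdC n k u y) * e y
          + (Complex.I / h * u y * e y) * ((((g y)⁻¹ j k : ℝ) : ℂ) * ((pdR n k φ y : ℝ) : ℂ)) := by
      intro k; rw [step0 k y]; ring
    rw [Finset.sum_congr rfl fun k _ => hsum k, Finset.sum_add_distrib,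
      ← Finset.sum_mul, ← Finset.mul_sum]
    show _ = (fluxC n g u j y + Complex.I / h * (((fluxR n g φ j y : ℝ) : ℂ) * u y)) * e y
    unfold fluxC fluxR
    push_cast
    ring
  -- rewrite the Laplacian of u * e
  have key : laplC n g (fun y => u y * e y) x
      = ((Real.sqrt (g x).det : ℝ) : ℂ)⁻¹ *
          ∑ j, pdC n j
            (fun y => (fluxC n g u j y
              + Complex.I / h * (((fluxR n g φ j y : ℝ) : ℂ) * u y)) * e y) x := by
    rw [laplC_eq]
    congr 1
    refine Finset.sum_congr rfl fun j _ => ?_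
    congr 1
    funext y
    exact step1 j y
  have step3 : ∀ j : Fin n,
      pdC n j (fun y => (fluxC n g u j y
          + Complex.I / h * (((fluxR n g φ j y : ℝ) : ℂ) * u y)) * e y) x
        = (pdC n j (fluxC n g u j) x
            + Complex.I / h * (((pdR n j (fluxR n g φ j) x : ℝ) : ℂ) * u x
              + ((fluxR n g φ j x : ℝ) : ℂ) * pdC n j u x)
            + (fluxC n g u j x + Complex.I / h * (((fluxR n g φ j x : ℝ) : ℂ) * u x))
              * (Complex.I / h * ((pdR n j φ x : ℝ) : ℂ))) * e x := by
    intro j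
    have hP : DifferentiableAt ℝ (fun y => ((fluxR n g φ j y : ℝ) : ℂ)) x :=
      (Complex.ofRealCLM.differentiable.comp (Pd j)) x
    have hPu : DifferentiableAt ℝ (fun y => ((fluxR n g φ j y : ℝ) : ℂ) * u y) x :=
      hP.mul (udiff x)
    have hbase : DifferentiableAt ℝ
        (fun y => fluxC n g u j y
          + Complex.I / h * (((fluxR n g φ j y : ℝ) : ℂ) * u y)) x :=
      (Fd j x).add (hPu.const_mul _)
    rw [pdC_mul hbase (ediff x), pdC_add (Fd j x) (hPu.const_mul _),
      pdC_const_mul _ hPu, pdC_mul hP (udiff x), pdC_ofReal ((Pd j) x), epd j x]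
    ring
  rw [key, Finset.sum_congr rfl fun j _ => step3 j, ← Finset.sum_mul]
  -- the three geometric identities
  have hsymm' := inv_symm hg_symm x
  have I1 : ∑ j, ((fluxR n g φ j x : ℝ) : ℂ) * pdC n j u x
      = ((Real.sqrt (g x).det : ℝ) : ℂ) *
          ∑ j, ∑ k, (((g x)⁻¹ j k * pdR n j φ x : ℝ) : ℂ) * pdC n k u x := by
    have lhs_eq : ∀ j : Fin n, ((fluxR n g φ j x : ℝ) : ℂ) * pdC n j u x
        = ∑ k, ((Real.sqrt (g x).det : ℝ) : ℂ) *
            ((((g x)⁻¹ j k : ℝ) : ℂ) * ((pdR n k φ x : ℝ) : ℂ) * pdC n j u x) := by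
      intro j
      show (((Real.sqrt (g x).det * ∑ k, (g x)⁻¹ j k * pdR n k φ x : ℝ)) : ℂ) * pdC n j u x = _
      push_cast
      rw [Finset.mul_sum, Finset.sum_mul]
      exact Finset.sum_congr rfl fun k _ => by ring
    rw [Finset.sum_congr rfl fun j _ => lhs_eq j, Finset.sum_comm, Finset.mul_sum]
    refine Finset.sum_congr rfl fun j _ => ?_
    rw [Finset.mul_sum]
    refine Finset.sum_congr rfl fun k _ => ?_
    rw [hsymm' k j]
    push_cast
    ring
  have I2 : ∑ j, fluxC n g u j x * ((pdR n j φ x : ℝ) : ℂ)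
      = ((Real.sqrt (g x).det : ℝ) : ℂ) *
          ∑ j, ∑ k, (((g x)⁻¹ j k * pdR n j φ x : ℝ) : ℂ) * pdC n k u x := by
    rw [Finset.mul_sum]
    refine Finset.sum_congr rfl fun j _ => ?_
    show (((Real.sqrt (g x).det : ℝ) : ℂ) * ∑ k, (((g x)⁻¹ j k : ℝ) : ℂ) * pdC n k u x)
        * ((pdR n j φ x : ℝ) : ℂ) = _
    rw [Finset.mul_sum, Finset.sum_mul, Finset.mul_sum]
    refine Finset.sum_congr rfl fun k _ => ?_
    push_cast
    ring
  have I3 : ∑ j, ((fluxR n g φ j x : ℝ) : ℂ) * ((pdR n j φ x : ℝ) : ℂ)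
      = ((Real.sqrt (g x).det : ℝ) : ℂ) * ((gradNormSq n g φ x : ℝ) : ℂ) := by
    unfold gradNormSq
    push_cast
    rw [Finset.mul_sum]
    refine Finset.sum_congr rfl fun j _ => ?_
    show (((Real.sqrt (g x).det * ∑ k, (g x)⁻¹ j k * pdR n k φ x : ℝ)) : ℂ) * _ = _
    push_cast
    rw [Finset.mul_sum, Finset.sum_mul, Finset.mul_sum]
    exact Finset.sum_congr rfl fun k _ => by ring
  have hlapl : ((laplR n g φ x : ℝ) : ℂ)
      = ((Real.sqrt (g x).det : ℝ) : ℂ)⁻¹ *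
          ∑ j, ((pdR n j (fluxR n g φ j) x : ℝ) : ℂ) := by
    rw [laplR_eq]; push_cast; ring
  have hS0 : ((Real.sqrt (g x).det : ℝ) : ℂ) ≠ 0 := by
    simp only [ne_eq, Complex.ofReal_eq_zero]
    exact (Real.sqrt_pos.mpr (hpos x).det_pos).ne'
  have hh' : (h : ℂ) ≠ 0 := Complex.ofReal_ne_zero.mpr hh
  -- expand the sum of step3 terms
  have expand : (∑ j, (pdC n j (fluxC n g u j) x
      + Complex.I / h * (((pdR n j (fluxR n g φ j) x : ℝ) : ℂ) * u x
        + ((fluxR n g φ j x : ℝ) : ℂ) * pdC n j u x)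
      + (fluxC n g u j x + Complex.I / h * (((fluxR n g φ j x : ℝ) : ℂ) * u x))
        * (Complex.I / h * ((pdR n j φ x : ℝ) : ℂ))))
      = (∑ j, pdC n j (fluxC n g u j) x)
        + Complex.I / h * ((∑ j, ((pdR n j (fluxR n g φ j) x : ℝ) : ℂ)) * u x
          + ∑ j, ((fluxR n g φ j x : ℝ) : ℂ) * pdC n j u x)
        + Complex.I / h * (∑ j, fluxC n g u j x * ((pdR n j φ x : ℝ) : ℂ))
        + Complex.I / h * (Complex.I / h) *
            ((∑ j, ((fluxR n g φ j x : ℝ) : ℂ) * ((pdR n j φ x : ℝ) : ℂ)) * u x) := by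
    rw [Finset.sum_congr rfl (fun j _ => (by ring :
      pdC n j (fluxC n g u j) x
      + Complex.I / h * (((pdR n j (fluxR n g φ j) x : ℝ) : ℂ) * u x
        + ((fluxR n g φ j x : ℝ) : ℂ) * pdC n j u x)
      + (fluxC n g u j x + Complex.I / h * (((fluxR n g φ j x : ℝ) : ℂ) * u x))
        * (Complex.I / h * ((pdR n j φ x : ℝ) : ℂ))
      = pdC n j (fluxC n g u j) x
        + Complex.I / h * (((pdR n j (fluxR n g φ j) x : ℝ) : ℂ) * u x
          + ((fluxR n g φ j x : ℝ) : ℂ) * pdC n j u x)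
        + Complex.I / h * (fluxC n g u j x * ((pdR n j φ x : ℝ) : ℂ))
        + Complex.I / h * (Complex.I / h) *
            (((fluxR n g φ j x : ℝ) : ℂ) * ((pdR n j φ x : ℝ) : ℂ) * u x)))]
    simp only [Finset.sum_add_distrib, ← Finset.mul_sum, ← Finset.sum_mul]
  rw [expand, I1, I2, I3, laplC_eq, hlapl]
  have hII : Complex.I * Complex.I = -1 := Complex.I_mul_I
  have hex : Complex.exp (Complex.I * ((φ x : ℂ) - c) / (h : ℂ)) = e x := rfl
  rw [hex]
  field_simp
  linear_combination (u x * ((Real.sqrt (g x).det : ℝ) : ℂ) * ((gradNormSq n g φ x : ℝ) : ℂ) * e x) * Complex.I_sq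

end Spatial


section Time

lemma deriv_differentiable_of_contDiff2 {f : ℝ → ℂ} (hf : ContDiff ℝ 2 f) :
    Differentiable ℝ (deriv f) := by
  have h : ContDiff ℝ ((1 : WithTop ℕ∞) + 1) f := by exact_mod_cast hf
  exact ((contDiff_succ_iff_deriv.mp h).2.2).differentiable one_ne_zero

lemma contDiff_slice_t {a : ℝ × (Fin n → ℝ) → ℂ} (ha : ContDiff ℝ 2 a) (x : Fin n → ℝ) :
    ContDiff ℝ 2 (fun s : ℝ => a (s, x)) :=
  ha.comp (contDiff_id.prodMk contDiff_const)

lemma contDiff_slice_x {a : ℝ × (Fin n → ℝ) → ℂ} (ha : ContDiff ℝ 2 a) (t : ℝ) :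
    ContDiff ℝ 2 (fun y : Fin n → ℝ => a (t, y)) :=
  ha.comp (contDiff_const.prodMk contDiff_id)

lemma dt2_mul_phase {a : ℝ × (Fin n → ℝ) → ℂ} (ha : ContDiff ℝ 2 a)
    (φ : (Fin n → ℝ) → ℝ) (h : ℝ) (t : ℝ) (x : Fin n → ℝ) :
    dt2 n (fun p => a p * Complex.exp (Complex.I * ((φ p.2 : ℂ) - (p.1 : ℂ)) / (h : ℂ))) t x
      = (dt2 n a t x - 2 * Complex.I / h * dt1 n a t x - 1 / (h : ℂ) ^ 2 * a (t, x)) *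
          Complex.exp (Complex.I * ((φ x : ℂ) - (t : ℂ)) / (h : ℂ)) := by
  set E : ℝ → ℂ := fun s => Complex.exp (Complex.I * ((φ x : ℂ) - (s : ℂ)) / (h : ℂ)) with hE
  have hEd : ∀ s, HasDerivAt E (-Complex.I / h * E s) s := fun s => hasDerivAt_phase_t (φ x) h s
  have haxd : Differentiable ℝ (fun s => a (s, x)) :=
    (contDiff_slice_t ha x).differentiable two_ne_zero
  have hd1d : Differentiable ℝ (deriv (fun s => a (s, x))) :=
    deriv_differentiable_of_contDiff2 (contDiff_slice_t ha x)
  have stepA : ∀ s : ℝ, dt1 n (fun p => a p *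
      Complex.exp (Complex.I * ((φ p.2 : ℂ) - (p.1 : ℂ)) / (h : ℂ))) s x
      = deriv (fun s' => a (s', x)) s * E s + -Complex.I / h * (a (s, x) * E s) := by
    intro s
    show deriv (fun s' : ℝ => a (s', x) * E s') s = _
    rw [deriv_fun_mul (haxd s) (hEd s).differentiableAt, (hEd s).deriv]
    ring
  show deriv (fun s => dt1 n (fun p => a p *
      Complex.exp (Complex.I * ((φ p.2 : ℂ) - (p.1 : ℂ)) / (h : ℂ))) s x) t = _
  rw [show (fun s => dt1 n (fun p => a p *
      Complex.exp (Complex.I * ((φ p.2 : ℂ) - (p.1 : ℂ)) / (h : ℂ))) s x)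
      = fun s => deriv (fun s' => a (s', x)) s * E s + -Complex.I / h * (a (s, x) * E s)
      from funext stepA]
  have d1 : DifferentiableAt ℝ (fun s => deriv (fun s' => a (s', x)) s * E s) t :=
    (hd1d t).mul (hEd t).differentiableAt
  have d2 : DifferentiableAt ℝ (fun s => a (s, x) * E s) t :=
    (haxd t).mul (hEd t).differentiableAt
  rw [deriv_fun_add d1 (d2.const_mul _), deriv_const_mul _ d2,
    deriv_fun_mul (hd1d t) (hEd t).differentiableAt,
    deriv_fun_mul (haxd t) (hEd t).differentiableAt, (hEd t).deriv]
  show deriv (deriv fun s' => a (s', x)) t * E t + _ + _ = _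
  have hdt2 : dt2 n a t x = deriv (deriv fun s' => a (s', x)) t := by
    unfold dt2 dt1; rfl
  have hdt1 : dt1 n a t x = deriv (fun s' => a (s', x)) t := rfl
  rw [show Complex.exp (Complex.I * ((φ x : ℂ) - (t : ℂ)) / (h : ℂ)) = E t from rfl,
    hdt2, hdt1]
  linear_combination (E t * ((h : ℂ))⁻¹ ^ 2 * a (t, x)) * Complex.I_sq

end Time


section Wave
variable {g : (Fin n → ℝ) → Matrix (Fin n) (Fin n) ℝ}

lemma waveOp_mul_phase
    (hg_symm : ∀ x, (g x).IsSymm) (hpos : ∀ x, (g x).PosDef)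
    (hg : ∀ j k, ContDiff ℝ 1 (fun x => g x j k))
    {φ : (Fin n → ℝ) → ℝ} (hφ : ContDiff ℝ 2 φ)
    {a : ℝ × (Fin n → ℝ) → ℂ} (ha : ContDiff ℝ 2 a)
    {h : ℝ} (hh : h ≠ 0) (t : ℝ) (x : Fin n → ℝ) :
    waveOp n g (fun p => a p * Complex.exp (Complex.I * ((φ p.2 : ℂ) - (p.1 : ℂ)) / (h : ℂ))) t x
      = Complex.exp (Complex.I * ((φ x : ℂ) - (t : ℂ)) / (h : ℂ)) *
          (waveOp n g a t x - 2 * Complex.I / h * transport n g φ a t x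
            + ((gradNormSq n g φ x - 1 : ℝ) : ℂ) / ((h : ℂ) ^ 2) * a (t, x)) := by
  unfold waveOp
  have hsp := laplC_mul_phase hg_symm hpos hg hφ (contDiff_slice_x ha t) hh ((t : ℝ) : ℂ) x
  have hslice : (fun y => (fun p : ℝ × (Fin n → ℝ) => a p *
      Complex.exp (Complex.I * ((φ p.2 : ℂ) - (p.1 : ℂ)) / (h : ℂ))) (t, y))
      = fun y => a (t, y) * Complex.exp (Complex.I * ((φ y : ℂ) - ((t : ℝ) : ℂ)) / (h : ℂ)) := rfl
  rw [hslice, hsp, dt2_mul_phase ha φ h t x]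
  unfold transport gradInnerC
  push_cast
  ring
end Wave


section Linear
variable {g : (Fin n → ℝ) → Matrix (Fin n) (Fin n) ℝ}

lemma laplC_add (hpos : ∀ x, (g x).PosDef) (hg : ∀ j k, ContDiff ℝ 1 (fun x => g x j k))
    {u v : (Fin n → ℝ) → ℂ} (hu : ContDiff ℝ 2 u) (hv : ContDiff ℝ 2 v) (x : Fin n → ℝ) :
    laplC n g (fun y => u y + v y) x = laplC n g u x + laplC n g v x := by
  have hflux : ∀ (j : Fin n) (y : Fin n → ℝ),
      fluxC n g (fun z => u z + v z) j y = fluxC n g u j y + fluxC n g v j y := by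
    intro j y
    unfold fluxC
    rw [show (∑ k, (((g y)⁻¹ j k : ℝ) : ℂ) * pdC n k (fun z => u z + v z) y)
        = ∑ k, ((((g y)⁻¹ j k : ℝ) : ℂ) * pdC n k u y + (((g y)⁻¹ j k : ℝ) : ℂ) * pdC n k v y)
      from Finset.sum_congr rfl fun k _ => by
        rw [pdC_add (hu.differentiable two_ne_zero y) (hv.differentiable two_ne_zero y)]; ring,
      Finset.sum_add_distrib]
    ring
  rw [laplC_eq, laplC_eq, laplC_eq]
  rw [show (∑ j, pdC n j (fluxC n g (fun y => u y + v y) j) x)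
      = ∑ j, (pdC n j (fluxC n g u j) x + pdC n j (fluxC n g v j) x)
    from Finset.sum_congr rfl fun j _ => by
      rw [show fluxC n g (fun y => u y + v y) j
          = fun y => fluxC n g u j y + fluxC n g v j y from funext (hflux j)]
      exact pdC_add (differentiable_fluxC hg hpos hu j x) (differentiable_fluxC hg hpos hv j x),
    Finset.sum_add_distrib]
  ring

lemma laplC_const_mul (hpos : ∀ x, (g x).PosDef) (hg : ∀ j k, ContDiff ℝ 1 (fun x => g x j k))
    {u : (Fin n → ℝ) → ℂ} (hu : ContDiff ℝ 2 u) (c : ℂ) (x : Fin n → ℝ) :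
    laplC n g (fun y => c * u y) x = c * laplC n g u x := by
  have hflux : ∀ (j : Fin n) (y : Fin n → ℝ),
      fluxC n g (fun z => c * u z) j y = c * fluxC n g u j y := by
    intro j y
    unfold fluxC
    rw [show (∑ k, (((g y)⁻¹ j k : ℝ) : ℂ) * pdC n k (fun z => c * u z) y)
        = ∑ k, c * ((((g y)⁻¹ j k : ℝ) : ℂ) * pdC n k u y)
      from Finset.sum_congr rfl fun k _ => by
        rw [pdC_const_mul c (hu.differentiable two_ne_zero y)]; ring,
      ← Finset.mul_sum]
    ring
  rw [laplC_eq, laplC_eq]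
  rw [show (∑ j, pdC n j (fluxC n g (fun y => c * u y) j) x)
      = ∑ j, c * pdC n j (fluxC n g u j) x
    from Finset.sum_congr rfl fun j _ => by
      rw [show fluxC n g (fun y => c * u y) j
          = fun y => c * fluxC n g u j y from funext (hflux j)]
      exact pdC_const_mul c (differentiable_fluxC hg hpos hu j x),
    ← Finset.mul_sum]
  ring

lemma waveOp_add (hpos : ∀ x, (g x).PosDef) (hg : ∀ j k, ContDiff ℝ 1 (fun x => g x j k))
    {u v : ℝ × (Fin n → ℝ) → ℂ} (hu : ContDiff ℝ 2 u) (hv : ContDiff ℝ 2 v)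
    (t : ℝ) (x : Fin n → ℝ) :
    waveOp n g (fun p => u p + v p) t x = waveOp n g u t x + waveOp n g v t x := by
  unfold waveOp
  have hdt1 : ∀ s : ℝ, dt1 n (fun p => u p + v p) s x = dt1 n u s x + dt1 n v s x := by
    intro s
    exact deriv_add ((contDiff_slice_t hu x).differentiable two_ne_zero s)
      ((contDiff_slice_t hv x).differentiable two_ne_zero s)
  have hdt2 : dt2 n (fun p => u p + v p) t x = dt2 n u t x + dt2 n v t x := by
    unfold dt2
    rw [show (fun s => dt1 n (fun p => u p + v p) s x)
        = fun s => dt1 n u s x + dt1 n v s x from funext hdt1]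
    exact deriv_add (deriv_differentiable_of_contDiff2 (contDiff_slice_t hu x) t)
      (deriv_differentiable_of_contDiff2 (contDiff_slice_t hv x) t)
  rw [hdt2, laplC_add hpos hg (contDiff_slice_x hu t) (contDiff_slice_x hv t)]
  ring

lemma waveOp_const_mul (hpos : ∀ x, (g x).PosDef) (hg : ∀ j k, ContDiff ℝ 1 (fun x => g x j k))
    {u : ℝ × (Fin n → ℝ) → ℂ} (hu : ContDiff ℝ 2 u) (c : ℂ) (t : ℝ) (x : Fin n → ℝ) :
    waveOp n g (fun p => c * u p) t x = c * waveOp n g u t x := by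
  unfold waveOp
  have hdt1 : ∀ s : ℝ, dt1 n (fun p => c * u p) s x = c * dt1 n u s x := by
    intro s
    exact deriv_const_mul c ((contDiff_slice_t hu x).differentiable two_ne_zero s)
  have hdt2 : dt2 n (fun p => c * u p) t x = c * dt2 n u t x := by
    unfold dt2
    rw [show (fun s => dt1 n (fun p => c * u p) s x)
        = fun s => c * dt1 n u s x from funext hdt1]
    exact deriv_const_mul c (deriv_differentiable_of_contDiff2 (contDiff_slice_t hu x) t)
  rw [hdt2, laplC_const_mul hpos hg (contDiff_slice_x hu t) c]
  ring

end Linear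

end WKB

open WKB in
/-- two-phase WKB expansion, equations (3.43)–(3.45). -/
theorem wkb_two_phase_expansion (n : ℕ) (hn : 1 ≤ n)
    (g₁ g₂ : (Fin n → ℝ) → Matrix (Fin n) (Fin n) ℝ)
    (hg₁_symm : ∀ x, (g₁ x).IsSymm) (hg₁_pos : ∀ x, (g₁ x).PosDef)
    (hg₂_symm : ∀ x, (g₂ x).IsSymm) (hg₂_pos : ∀ x, (g₂ x).PosDef)
    (hg₁_smooth : ∀ j k, ContDiff ℝ 1 (fun x => g₁ x j k))
    (hg₂_smooth : ∀ j k, ContDiff ℝ 1 (fun x => g₂ x j k))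
    (φ₁ φ₂ : (Fin n → ℝ) → ℝ) (hφ₁ : ContDiff ℝ 2 φ₁) (hφ₂ : ContDiff ℝ 2 φ₂)
    (heik₁ : ∀ x, gradNormSq n g₁ φ₁ x = 1)
    (heik₂ : ∀ x, gradNormSq n g₂ φ₂ x = 1)
    (s : (Fin n → ℝ) → Fin n → Fin n → ℝ)
    (hs : ∀ x j k, s x j k = (g₂ x)⁻¹ j k - (g₁ x)⁻¹ j k)
    (h : ℝ) (hh : 0 < h)
    (m : (Fin n → ℝ) → ℂ)
    (hm : ∀ x, m x = -(Complex.I / 2) * Complex.exp (Complex.I * ((φ₁ x : ℂ) - (φ₂ x : ℂ)) / (h : ℂ)) *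
      ∑ j, ∑ k, ((s x j k : ℝ) : ℂ) * ((pdR n j φ₁ x : ℝ) : ℂ) * ((pdR n k φ₁ x : ℝ) : ℂ))
    (a₂ a₃ : ℝ × (Fin n → ℝ) → ℂ) (ha₂ : ContDiff ℝ 2 a₂) (ha₃ : ContDiff ℝ 2 a₃)
    (htrans₂ : ∀ (t : ℝ) (x : Fin n → ℝ), transport n g₁ φ₁ a₂ t x = 0)
    (htrans₃ : ∀ (t : ℝ) (x : Fin n → ℝ), transport n g₂ φ₂ a₃ t x = a₂ (t, x) * m x) :
    ∀ (t : ℝ) (x : Fin n → ℝ),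
      waveOp n g₂ (fun p =>
          (h : ℂ) * a₂ p * Complex.exp (Complex.I * ((φ₁ p.2 : ℂ) - (p.1 : ℂ)) / (h : ℂ))
            + a₃ p * Complex.exp (Complex.I * ((φ₂ p.2 : ℂ) - (p.1 : ℂ)) / (h : ℂ))) t x
        = Complex.exp (Complex.I * ((φ₁ x : ℂ) - (t : ℂ)) / (h : ℂ)) *
            ((h : ℂ) * waveOp n g₂ a₂ t x
              - 2 * Complex.I *
                  (∑ j, ∑ k, ((s x j k * pdR n j φ₁ x : ℝ) : ℂ) * pdC n k (fun y => a₂ (t, y)) x)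
              - Complex.I * ((laplR n g₂ φ₁ x : ℝ) - (laplR n g₁ φ₁ x : ℝ) : ℂ) * a₂ (t, x))
          + Complex.exp (Complex.I * ((φ₂ x : ℂ) - (t : ℂ)) / (h : ℂ)) * waveOp n g₂ a₃ t x := by
  intro t x
  have hh0 : h ≠ 0 := hh.ne'
  have hh' : (h : ℂ) ≠ 0 := Complex.ofReal_ne_zero.mpr hh0
  -- phase regularity
  have hphase : ∀ (φ : (Fin n → ℝ) → ℝ), ContDiff ℝ 2 φ →
      ContDiff ℝ 2 (fun p : ℝ × (Fin n → ℝ) =>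
        Complex.exp (Complex.I * ((φ p.2 : ℂ) - (p.1 : ℂ)) / (h : ℂ))) := by
    intro φ hφ
    have hin : ContDiff ℝ 2 (fun p : ℝ × (Fin n → ℝ) =>
        Complex.I * ((φ p.2 : ℂ) - (p.1 : ℂ)) / (h : ℂ)) := by
      refine ContDiff.div_const (contDiff_const.mul ?_) _
      exact (Complex.ofRealCLM.contDiff.comp (hφ.comp contDiff_snd)).sub
        (Complex.ofRealCLM.contDiff.comp contDiff_fst)
    exact (Complex.contDiff_exp.of_le le_top).comp hin
  have hE₁ := hphase φ₁ hφ₁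
  have hE₂ := hphase φ₂ hφ₂
  have hw2 : ContDiff ℝ 2 (fun p : ℝ × (Fin n → ℝ) =>
      a₂ p * Complex.exp (Complex.I * ((φ₁ p.2 : ℂ) - (p.1 : ℂ)) / (h : ℂ))) := ha₂.mul hE₁
  have hw3 : ContDiff ℝ 2 (fun p : ℝ × (Fin n → ℝ) =>
      a₃ p * Complex.exp (Complex.I * ((φ₂ p.2 : ℂ) - (p.1 : ℂ)) / (h : ℂ))) := ha₃.mul hE₂
  have hc2 : ContDiff ℝ 2 (fun p : ℝ × (Fin n → ℝ) =>
      (h : ℂ) * (a₂ p * Complex.exp (Complex.I * ((φ₁ p.2 : ℂ) - (p.1 : ℂ)) / (h : ℂ)))) :=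
    contDiff_const.mul hw2
  -- reshape the function
  have hfun : (fun p : ℝ × (Fin n → ℝ) =>
      (h : ℂ) * a₂ p * Complex.exp (Complex.I * ((φ₁ p.2 : ℂ) - (p.1 : ℂ)) / (h : ℂ))
        + a₃ p * Complex.exp (Complex.I * ((φ₂ p.2 : ℂ) - (p.1 : ℂ)) / (h : ℂ)))
      = fun p : ℝ × (Fin n → ℝ) =>
        ((h : ℂ) * (a₂ p * Complex.exp (Complex.I * ((φ₁ p.2 : ℂ) - (p.1 : ℂ)) / (h : ℂ))))
          + (a₃ p * Complex.exp (Complex.I * ((φ₂ p.2 : ℂ) - (p.1 : ℂ)) / (h : ℂ))) := by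
    funext p; ring
  rw [hfun, waveOp_add hg₂_pos hg₂_smooth hc2 hw3 t x,
    waveOp_const_mul hg₂_pos hg₂_smooth hw2 ((h : ℝ) : ℂ) t x,
    waveOp_mul_phase hg₂_symm hg₂_pos hg₂_smooth hφ₁ ha₂ hh0 t x,
    waveOp_mul_phase hg₂_symm hg₂_pos hg₂_smooth hφ₂ ha₃ hh0 t x,
    htrans₃ t x, hm x, heik₂ x]
  -- transport identity for the φ₁ phase
  have hgi : gradInnerC n g₂ φ₁ a₂ t x = gradInnerC n g₁ φ₁ a₂ t x
      + ∑ j, ∑ k, ((s x j k * pdR n j φ₁ x : ℝ) : ℂ) * pdC n k (fun y => a₂ (t, y)) x := by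
    unfold gradInnerC
    rw [← Finset.sum_add_distrib]
    refine Finset.sum_congr rfl fun j _ => ?_
    rw [← Finset.sum_add_distrib]
    refine Finset.sum_congr rfl fun k _ => ?_
    rw [hs x j k]; push_cast; ring
  have hC : transport n g₂ φ₁ a₂ t x
      = (∑ j, ∑ k, ((s x j k * pdR n j φ₁ x : ℝ) : ℂ) * pdC n k (fun y => a₂ (t, y)) x)
        + (1 / 2 : ℂ) * (((laplR n g₂ φ₁ x : ℝ) : ℂ) - ((laplR n g₁ φ₁ x : ℝ) : ℂ)) * a₂ (t, x) := by
    have h0 := htrans₂ t x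
    unfold transport at h0 ⊢
    rw [hgi]
    linear_combination h0
  rw [hC]
  -- eikonal difference for φ₁
  have hD : (gradNormSq n g₂ φ₁ x - 1 : ℝ)
      = ∑ j, ∑ k, s x j k * pdR n j φ₁ x * pdR n k φ₁ x := by
    rw [← heik₁ x]
    unfold gradNormSq
    rw [← Finset.sum_sub_distrib]
    refine Finset.sum_congr rfl fun j _ => ?_
    rw [← Finset.sum_sub_distrib]
    refine Finset.sum_congr rfl fun k _ => ?_
    rw [hs x j k]; ring
  rw [hD]
  -- exponential splitting
  have hEE : Complex.exp (Complex.I * ((φ₂ x : ℂ) - (t : ℂ)) / (h : ℂ)) *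
        Complex.exp (Complex.I * ((φ₁ x : ℂ) - (φ₂ x : ℂ)) / (h : ℂ))
      = Complex.exp (Complex.I * ((φ₁ x : ℂ) - (t : ℂ)) / (h : ℂ)) := by
    rw [← Complex.exp_add]
    congr 1
    ring
  push_cast
  field_simp
  linear_combination
    ((h:ℂ) * Complex.I ^ 2 * (a₂ (t, x) *
      (∑ j, ∑ k, ((s x j k : ℝ) : ℂ) * ((pdR n j φ₁ x : ℝ) : ℂ) * ((pdR n k φ₁ x : ℝ) : ℂ)))) * hEE
    + ((h:ℂ) * (a₂ (t, x) *
      (∑ j, ∑ k, ((s x j k : ℝ) : ℂ) * ((pdR n j φ₁ x : ℝ) : ℂ) * ((pdR n k φ₁ x : ℝ) : ℂ))) *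
        Complex.exp (Complex.I * ((φ₁ x : ℂ) - (t : ℂ)) / (h : ℂ))) * Complex.I_sq
end
end

section
/- Let n ≥ 1, m ≥ 1, R > 0 and M ≥ 0, and let Ω ⊆ { x ∈ ℝⁿ : |x| < R } be an open set. Let A : ℝⁿ → (real m×m matrices) be continuous with operator norm ‖A(x)‖ ≤ M for all x, let F : ℝⁿ → ℝ^m be continuous with compact support, and let v : ℝⁿ → ℝ^m be of class C¹ with v(x', x_n) = 0 whenever x_n ≤ −R, satisfying the ordinary differential equation in the last variable ∂_{x_n} v(x) = A(x) v(x) + F(x) for all x ∈ ℝⁿ. Then ( ∫_Ω |v(x)|² dx )^{1/2} ≤ 2R e^{2MR} ( ∫_{ℝⁿ} |F(x)|² dx )^{1/2}. -/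
noncomputable section

open MeasureTheory

/-- Cauchy–Schwarz for interval integrals of a continuous function. -/
lemma cs_interval {f : ℝ → ℝ} {a b : ℝ} (hab : a ≤ b)
    (hf : Continuous f) :
    (∫ s in a..b, f s) ^ 2 ≤ (b - a) * ∫ s in a..b, f s ^ 2 := by
  rcases eq_or_lt_of_le hab with rfl | hlt
  · simp
  have hba : 0 < b - a := by linarith
  set I := ∫ s in a..b, f s with hI
  set c : ℝ := I / (b - a) with hc
  have hint : IntervalIntegrable f volume a b := hf.intervalIntegrable a b
  have hint2 : IntervalIntegrable (fun s => f s ^ 2) volume a b :=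
    (hf.pow 2).intervalIntegrable a b
  have h0 : 0 ≤ ∫ s in a..b, (f s - c) ^ 2 :=
    intervalIntegral.integral_nonneg hab (fun u _ => sq_nonneg _)
  have hexp : ∫ s in a..b, (f s - c) ^ 2
      = (∫ s in a..b, f s ^ 2) - 2 * c * I + c ^ 2 * (b - a) := by
    have : ∀ s, (f s - c) ^ 2 = f s ^ 2 - (2 * c) * f s + c ^ 2 := by intro s; ring
    simp_rw [this]
    rw [intervalIntegral.integral_add ((hint2.sub (hint.const_mul _))) intervalIntegrable_const,
      intervalIntegral.integral_sub hint2 (hint.const_mul _),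
      intervalIntegral.integral_const_mul, intervalIntegral.integral_const]
    simp only [smul_eq_mul, ← hI]
    ring
  rw [hexp] at h0
  have hc' : c * (b - a) = I := by rw [hc]; field_simp
  nlinarith [sq_nonneg c, sq_nonneg I, mul_pos hba hba]

/-- Grönwall-type inequality along a line: if `g` solves a linear ODE with forcing `ψ`
and vanishes at `-R`, then at any `t0 ∈ [-R, R]` it is bounded by
`exp (2 M R)` times the integral of the forcing. -/
lemma gronwall_line {E : Type*} [NormedAddCommGroup E] [NormedSpace ℝ E] [CompleteSpace E]
    {g g' : ℝ → E} {ψ : ℝ → ℝ} {M R t0 : ℝ} (hM : 0 ≤ M)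
    (hg : ∀ t, HasDerivAt g (g' t) t) (hg'c : Continuous g')
    (hψ : Continuous ψ) (hψ0 : ∀ t, 0 ≤ ψ t)
    (hbd : ∀ t, ‖g' t‖ ≤ M * ‖g t‖ + ψ t)
    (hg0 : g (-R) = 0) (ht0 : t0 ∈ Set.Icc (-R) R) :
    ‖g t0‖ ≤ Real.exp (2 * M * R) * ∫ s in (-R)..R, ψ s := by
  have hgd : Differentiable ℝ g := fun t => (hg t).differentiableAt
  have hgc : Continuous g := hgd.continuous
  set q : ℝ → ℝ := fun t => M * ‖g t‖ + ψ t with hq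
  have hqc : Continuous q := ((continuous_const.mul hgc.norm).add hψ)
  have hq0 : ∀ t, 0 ≤ q t := fun t =>
    add_nonneg (mul_nonneg hM (norm_nonneg _)) (hψ0 t)
  set G : ℝ → ℝ := fun t => ∫ s in (-R)..t, q s with hG
  have hGd : ∀ t, HasDerivAt G (q t) t := fun t =>
    intervalIntegral.integral_hasDerivAt_right (hqc.intervalIntegrable _ _)
      (hqc.stronglyMeasurable.stronglyMeasurableAtFilter) hqc.continuousAt
  have claim1 : ∀ t, -R ≤ t → ‖g t‖ ≤ G t := by
    intro t ht
    have hfc : ∫ s in (-R)..t, g' s = g t - g (-R) :=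
      intervalIntegral.integral_eq_sub_of_hasDerivAt (fun s _ => hg s)
        (hg'c.intervalIntegrable _ _)
    calc ‖g t‖ = ‖∫ s in (-R)..t, g' s‖ := by rw [hfc, hg0, sub_zero]
      _ ≤ ∫ s in (-R)..t, ‖g' s‖ := intervalIntegral.norm_integral_le_integral_norm ht
      _ ≤ ∫ s in (-R)..t, q s :=
          intervalIntegral.integral_mono_on ht (hg'c.norm.intervalIntegrable _ _)
            (hqc.intervalIntegrable _ _) (fun s _ => hbd s)
  have hec : Continuous fun s => Real.exp (-(M * s)) * ψ s :=
    (Real.continuous_exp.comp ((continuous_const.mul continuous_id).neg)).mul hψ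
  set c : ℝ → ℝ := fun t => ∫ s in (-R)..t, Real.exp (-(M * s)) * ψ s with hcdef
  have hcd : ∀ t, HasDerivAt c (Real.exp (-(M * t)) * ψ t) t := fun t =>
    intervalIntegral.integral_hasDerivAt_right (hec.intervalIntegrable _ _)
      (hec.stronglyMeasurable.stronglyMeasurableAtFilter) hec.continuousAt
  set φ : ℝ → ℝ := fun t => Real.exp (-(M * t)) * G t - c t with hφ
  have hφd : ∀ t, HasDerivAt φ (Real.exp (-(M * t)) * (M * ‖g t‖ - M * G t)) t := by
    intro t
    have h1 : HasDerivAt (fun t : ℝ => -(M * t)) (-M) t := by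
      exact ((hasDerivAt_id' t).const_mul M).neg.congr_deriv (by ring)
    have h2 : HasDerivAt (fun t : ℝ => Real.exp (-(M * t)))
        (Real.exp (-(M * t)) * -M) t := h1.exp
    have h3 := (h2.mul (hGd t)).sub (hcd t)
    exact h3.congr_deriv (by simp only [hq]; ring)
  have hφdiff : Differentiable ℝ φ := fun t => (hφd t).differentiableAt
  have hanti : AntitoneOn φ (Set.Icc (-R) t0) := by
    apply antitoneOn_of_deriv_nonpos (convex_Icc _ _) hφdiff.continuous.continuousOn
      (fun t _ => (hφdiff t).differentiableWithinAt)
    intro t ht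
    rw [interior_Icc] at ht
    rw [(hφd t).deriv]
    have h1 : ‖g t‖ ≤ G t := claim1 t ht.1.le
    have : M * ‖g t‖ - M * G t ≤ 0 := by nlinarith
    exact mul_nonpos_of_nonneg_of_nonpos (Real.exp_pos _).le this
  have hRt0 : -R ≤ t0 := ht0.1
  have hφ0 : φ (-R) = 0 := by
    simp [hφ, hG, hcdef, intervalIntegral.integral_same]
  have hstep : φ t0 ≤ 0 := by
    rw [← hφ0]
    exact hanti (Set.left_mem_Icc.2 hRt0) (Set.right_mem_Icc.2 hRt0) hRt0
  have hkey : Real.exp (-(M * t0)) * G t0 ≤ c t0 := by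
    simpa [hφ, sub_nonpos] using hstep
  have hc1 : c t0 ≤ Real.exp (M * R) * ∫ s in (-R)..t0, ψ s := by
    rw [← intervalIntegral.integral_const_mul]
    apply intervalIntegral.integral_mono_on hRt0 (hec.intervalIntegrable _ _)
      ((continuous_const.mul hψ).intervalIntegrable _ _)
    intro s hs
    have : Real.exp (-(M * s)) ≤ Real.exp (M * R) := by
      apply Real.exp_le_exp.2
      nlinarith [hs.1]
    exact mul_le_mul_of_nonneg_right this (hψ0 s)
  have hc2 : ∫ s in (-R)..t0, ψ s ≤ ∫ s in (-R)..R, ψ s :=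
    intervalIntegral.integral_mono_interval le_rfl hRt0 ht0.2
      (Filter.Eventually.of_forall fun s => hψ0 s) (hψ.intervalIntegrable _ _)
  have hGle : G t0 ≤ Real.exp (M * t0) * c t0 := by
    have h := mul_le_mul_of_nonneg_left hkey (Real.exp_pos (M * t0)).le
    calc G t0 = Real.exp (M * t0) * (Real.exp (-(M * t0)) * G t0) := by
          rw [← mul_assoc, ← Real.exp_add]; simp
      _ ≤ Real.exp (M * t0) * c t0 := h
  have hcnonneg : 0 ≤ ∫ s in (-R)..t0, ψ s :=
    intervalIntegral.integral_nonneg hRt0 (fun u _ => hψ0 u)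
  calc ‖g t0‖ ≤ G t0 := claim1 t0 hRt0
    _ ≤ Real.exp (M * t0) * c t0 := hGle
    _ ≤ Real.exp (M * t0) * (Real.exp (M * R) * ∫ s in (-R)..t0, ψ s) :=
        mul_le_mul_of_nonneg_left hc1 (Real.exp_pos _).le
    _ = Real.exp (M * t0 + M * R) * ∫ s in (-R)..t0, ψ s := by
        rw [Real.exp_add]; ring
    _ ≤ Real.exp (2 * M * R) * ∫ s in (-R)..t0, ψ s := by
        apply mul_le_mul_of_nonneg_right _ hcnonneg
        apply Real.exp_le_exp.2
        nlinarith [ht0.2]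
    _ ≤ Real.exp (2 * M * R) * ∫ s in (-R)..R, ψ s :=
        mul_le_mul_of_nonneg_left hc2 (Real.exp_pos _).le

set_option maxHeartbeats 2000000 in
/-- Grönwall-type `L²` bound for a linear first-order ODE system in the
last variable, equations (4.29)–(4.34) of the proof of Lemma 4.4. -/
theorem gronwall_L2_bound (n m : ℕ) (hn : 1 ≤ n) (hm : 1 ≤ m) (R M : ℝ)
    (hR : 0 < R) (hM : 0 ≤ M)
    (Ω : Set (Fin n → ℝ)) (hΩop : IsOpen Ω)
    (hΩball : Ω ⊆ {x : Fin n → ℝ | ∑ i, x i ^ 2 < R ^ 2})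
    (en : Fin n) (hen : (en : ℕ) = n - 1)
    (A : (Fin n → ℝ) → (EuclideanSpace ℝ (Fin m) →L[ℝ] EuclideanSpace ℝ (Fin m)))
    (hA_cont : Continuous A) (hA_bd : ∀ x, ‖A x‖ ≤ M)
    (F : (Fin n → ℝ) → EuclideanSpace ℝ (Fin m))
    (hF_cont : Continuous F) (hF_supp : HasCompactSupport F)
    (v : (Fin n → ℝ) → EuclideanSpace ℝ (Fin m)) (hv : ContDiff ℝ 1 v)
    (hv_zero : ∀ x : Fin n → ℝ, x en ≤ -R → v x = 0)
    (hODE : ∀ x : Fin n → ℝ, fderiv ℝ v x (Pi.single en 1) = A x (v x) + F x) :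
    Real.sqrt (∫ x in Ω, ‖v x‖ ^ 2)
      ≤ 2 * R * Real.exp (2 * M * R) * Real.sqrt (∫ x : Fin n → ℝ, ‖F x‖ ^ 2) := by
  obtain ⟨n', rfl⟩ : ∃ k, n = k + 1 := ⟨n - 1, (Nat.succ_pred_eq_of_pos hn).symm⟩
  have hvc : Continuous v := hv.continuous
  have hRR : (-R) ≤ R := by linarith
  -- pointwise Grönwall bound along the line in direction `en`
  have key : ∀ x : Fin (n' + 1) → ℝ, x en ∈ Set.Icc (-R) R →
      ‖v x‖ ≤ Real.exp (2 * M * R) * ∫ s in (-R)..R, ‖F (Function.update x en s)‖ := by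
    intro x hx
    set ℓ : ℝ → (Fin (n' + 1) → ℝ) := fun t => Function.update x en t with hℓ
    have hℓc : Continuous ℓ := continuous_const.update en continuous_id
    have hℓd : ∀ t : ℝ, HasDerivAt ℓ (Pi.single en (1 : ℝ) : Fin (n' + 1) → ℝ) t := by
      intro t
      have heq : ℓ = fun t => x + (t - x en) • (Pi.single en (1 : ℝ) : Fin (n' + 1) → ℝ) := by
        funext t
        funext i
        by_cases h : i = en
        · subst h; simp [hℓ]
        · simp [hℓ, Function.update_of_ne h, Pi.single_eq_of_ne h]
      rw [heq]
      have h := ((hasDerivAt_id t).sub_const (x en)).smul_const (Pi.single en (1 : ℝ) : Fin (n' + 1) → ℝ)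
      simpa using h.const_add x
    set g' : ℝ → EuclideanSpace ℝ (Fin m) := fun t => A (ℓ t) (v (ℓ t)) + F (ℓ t) with hg'
    have hgd : ∀ t, HasDerivAt (fun t => v (ℓ t)) (g' t) t := by
      intro t
      have h := (hv.differentiable one_ne_zero (ℓ t)).hasFDerivAt.comp_hasDerivAt t (hℓd t)
      rw [hODE (ℓ t)] at h
      exact h
    have hg'c : Continuous g' :=
      ((hA_cont.comp hℓc).clm_apply (hvc.comp hℓc)).add (hF_cont.comp hℓc)
    have hbd : ∀ t, ‖g' t‖ ≤ M * ‖v (ℓ t)‖ + ‖F (ℓ t)‖ := by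
      intro t
      calc ‖g' t‖ ≤ ‖A (ℓ t) (v (ℓ t))‖ + ‖F (ℓ t)‖ := norm_add_le _ _
        _ ≤ M * ‖v (ℓ t)‖ + ‖F (ℓ t)‖ := by
            have h1 := (A (ℓ t)).le_opNorm (v (ℓ t))
            have h2 := hA_bd (ℓ t)
            nlinarith [norm_nonneg (v (ℓ t))]
    have hg0 : v (ℓ (-R)) = 0 := hv_zero _ (by simp [hℓ])
    have h := gronwall_line (g := fun t => v (ℓ t)) (g' := g') (ψ := fun t => ‖F (ℓ t)‖)
      hM hgd hg'c (hF_cont.norm.comp hℓc) (fun t => norm_nonneg _) hbd hg0 hx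
    simpa [hℓ, Function.update_eq_self] using h
  -- the squared, Cauchy–Schwarz form of the pointwise bound
  set T : (Fin (n' + 1) → ℝ) → ℝ :=
    fun x => ∫ s in Set.Ioc (-R) R, ‖F (Function.update x en s)‖ ^ 2 with hT
  have key2 : ∀ x : Fin (n' + 1) → ℝ, x en ∈ Set.Icc (-R) R →
      ‖v x‖ ^ 2 ≤ (2 * R * Real.exp (2 * M * R) ^ 2) * T x := by
    intro x hx
    have h1 := key x hx
    have hψc : Continuous fun s => ‖F (Function.update x en s)‖ :=
      hF_cont.norm.comp (continuous_const.update en continuous_id)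
    have h2 := cs_interval hRR hψc
    have hInn : 0 ≤ ∫ s in (-R)..R, ‖F (Function.update x en s)‖ :=
      intervalIntegral.integral_nonneg hRR (fun u _ => norm_nonneg _)
    have h3 : ‖v x‖ ^ 2 ≤ Real.exp (2 * M * R) ^ 2 *
        (∫ s in (-R)..R, ‖F (Function.update x en s)‖) ^ 2 := by
      have h := mul_le_mul h1 h1 (norm_nonneg _) (by positivity)
      calc ‖v x‖ ^ 2 = ‖v x‖ * ‖v x‖ := sq ‖v x‖
        _ ≤ (Real.exp (2 * M * R) * ∫ s in (-R)..R, ‖F (Function.update x en s)‖) *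
            (Real.exp (2 * M * R) * ∫ s in (-R)..R, ‖F (Function.update x en s)‖) := h
        _ = Real.exp (2 * M * R) ^ 2 *
            (∫ s in (-R)..R, ‖F (Function.update x en s)‖) ^ 2 := by ring
    have h4 : (∫ s in (-R)..R, ‖F (Function.update x en s)‖ ^ 2) = T x := by
      rw [hT, intervalIntegral.integral_of_le hRR]
    calc ‖v x‖ ^ 2 ≤ Real.exp (2 * M * R) ^ 2 *
          (∫ s in (-R)..R, ‖F (Function.update x en s)‖) ^ 2 := h3
      _ ≤ Real.exp (2 * M * R) ^ 2 *
          ((R - (-R)) * ∫ s in (-R)..R, ‖F (Function.update x en s)‖ ^ 2) :=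
          mul_le_mul_of_nonneg_left h2 (by positivity)
      _ = (2 * R * Real.exp (2 * M * R) ^ 2) * T x := by rw [h4]; ring
  -- continuity and positivity of T
  have hTc : Continuous T := by
    have h0 : Continuous fun p : (Fin (n' + 1) → ℝ) × ℝ =>
        ‖F (Function.update p.1 en p.2)‖ ^ 2 :=
      (hF_cont.comp (continuous_fst.update en continuous_snd)).norm.pow 2
    have h1 := continuous_parametric_integral_of_continuous (μ := volume)
      (f := fun (x : Fin (n' + 1) → ℝ) (s : ℝ) => ‖F (Function.update x en s)‖ ^ 2)
      h0 (isCompact_Icc (a := -R) (b := R))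
    have heq : T = fun x => ∫ s in Set.Icc (-R) R, ‖F (Function.update x en s)‖ ^ 2 := by
      funext x; rw [hT]; exact integral_Icc_eq_integral_Ioc.symm
    rw [heq]; exact h1
  have hT0 : ∀ x, 0 ≤ T x := fun x =>
    setIntegral_nonneg measurableSet_Ioc (fun s _ => by positivity)
  -- support considerations
  obtain ⟨r, hr⟩ := hF_supp.isBounded.subset_closedBall (0 : Fin (n' + 1) → ℝ)
  set ρ := max r R with hρ
  have hρR : R ≤ ρ := le_max_right _ _
  have hrρ : r ≤ ρ := le_max_left _ _
  have hρ0 : 0 < ρ := lt_of_lt_of_le hR hρR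
  set B := Metric.closedBall (0 : Fin (n' + 1) → ℝ) ρ with hB
  set S := (fun x : Fin (n' + 1) → ℝ => x en) ⁻¹' (Set.Ioo (-R) R) with hS
  have hS_meas : MeasurableSet S := measurableSet_Ioo.preimage (measurable_pi_apply en)
  have hTzero : ∀ x ∈ S, x ∉ B → T x = 0 := by
    intro x hxS hxB
    have hxnorm : ¬ ‖x‖ ≤ ρ := by
      simpa [hB, Metric.mem_closedBall, dist_zero_right] using hxB
    obtain ⟨i, hi⟩ : ∃ i, ¬ ‖x i‖ ≤ ρ := by
      by_contra h
      push_neg at h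
      exact hxnorm ((pi_norm_le_iff_of_nonneg hρ0.le).2 h)
    have hxen : |x en| ≤ ρ := by
      have hmem : x en ∈ Set.Ioo (-R) R := hxS
      have : |x en| < R := abs_lt.2 ⟨hmem.1, hmem.2⟩
      linarith
    have hien : i ≠ en := by
      rintro rfl
      exact hi (by simpa [Real.norm_eq_abs] using hxen)
    have hFz : ∀ s, F (Function.update x en s) = 0 := by
      intro s
      apply image_eq_zero_of_notMem_tsupport
      intro hmem
      have hball := hr hmem
      have h2 : ‖(Function.update x en s) i‖ ≤ ‖Function.update x en s‖ :=
        norm_le_pi_norm _ i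
      rw [Function.update_of_ne hien] at h2
      have h3 : ‖Function.update x en s‖ ≤ r := by
        simpa [Metric.mem_closedBall, dist_zero_right] using hball
      exact hi ((h2.trans h3).trans hrρ)
    rw [hT]
    simp [hFz]
  have hT_B : IntegrableOn T B := hTc.continuousOn.integrableOn_compact
    (isCompact_closedBall _ _)
  have hTS : IntegrableOn T S := by
    have hind : S.indicator T = (S ∩ B).indicator T := by
      funext x
      by_cases hxS : x ∈ S
      · by_cases hxB : x ∈ B
        · simp [Set.indicator_apply, hxS, hxB]
        · simp [Set.indicator_apply, hxS, hxB, hTzero x hxS hxB]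
      · simp [Set.indicator_apply, hxS]
    rw [← integrable_indicator_iff hS_meas, hind,
      integrable_indicator_iff (hS_meas.inter (measurableSet_closedBall))]
    exact hT_B.mono_set Set.inter_subset_right
  -- Ω is inside the slab S and the ball B
  have hΩcoord : ∀ x ∈ Ω, ∀ i, x i ^ 2 < R ^ 2 := by
    intro x hx i
    have h1 := hΩball hx
    have h2 : x i ^ 2 ≤ ∑ j, x j ^ 2 :=
      Finset.single_le_sum (fun j _ => sq_nonneg (x j)) (Finset.mem_univ i)
    simp only [Set.mem_setOf_eq] at h1
    linarith
  have hΩS : Ω ⊆ S := by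
    intro x hx
    have h := hΩcoord x hx en
    exact ⟨by nlinarith, by nlinarith⟩
  have hΩB' : Ω ⊆ Metric.closedBall (0 : Fin (n' + 1) → ℝ) R := by
    intro x hx
    rw [Metric.mem_closedBall, dist_zero_right]
    apply (pi_norm_le_iff_of_nonneg hR.le).2
    intro i
    have h := hΩcoord x hx i
    rw [Real.norm_eq_abs]
    nlinarith [abs_nonneg (x i), sq_abs (x i)]
  have hΩB : Ω ⊆ B := hΩB'.trans (Metric.closedBall_subset_closedBall hρR)
  have hvΩ : IntegrableOn (fun x => ‖v x‖ ^ 2) Ω :=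
    (((hvc.norm.pow 2).continuousOn.integrableOn_compact
      (isCompact_closedBall (0 : Fin (n' + 1) → ℝ) R)).mono_set hΩB')
  set C := 2 * R * Real.exp (2 * M * R) ^ 2 with hC
  have hC0 : 0 ≤ C := by positivity
  have step1 : ∫ x in Ω, ‖v x‖ ^ 2 ≤ ∫ x in Ω, C * T x := by
    apply setIntegral_mono_on hvΩ ((hT_B.mono_set hΩB).const_mul C) hΩop.measurableSet
    intro x hx
    exact key2 x (Set.Ioo_subset_Icc_self (hΩS hx))
  have step2 : ∫ x in Ω, C * T x ≤ ∫ x in S, C * T x := by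
    apply setIntegral_mono_set (hTS.const_mul C)
    · exact Filter.Eventually.of_forall fun x => mul_nonneg hC0 (hT0 x)
    · exact HasSubset.Subset.eventuallyLE hΩS
  have step3 : ∫ x in S, C * T x = C * ∫ x in S, T x := integral_const_mul C T
  -- Fubini via the measurable equivalence splitting off the coordinate `en`
  set e := MeasurableEquiv.piFinSuccAbove (fun _ : Fin (n' + 1) => ℝ) en with he
  have hesymm : ∀ p : ℝ × (Fin n' → ℝ), e.symm p = Fin.insertNth en p.1 p.2 := fun p => rfl
  have MP : MeasurePreserving e (volume : Measure (Fin (n' + 1) → ℝ))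
      ((volume : Measure ℝ).prod (volume : Measure (Fin n' → ℝ))) := by
    have h := measurePreserving_piFinSuccAbove (fun _ : Fin (n' + 1) => (volume : Measure ℝ)) en
    exact h
  have MPsymm := MeasurePreserving.symm e MP
  have hFsq_cont : Continuous fun x : Fin (n' + 1) → ℝ => ‖F x‖ ^ 2 := hF_cont.norm.pow 2
  have hFsq_supp : HasCompactSupport fun x : Fin (n' + 1) → ℝ => ‖F x‖ ^ 2 :=
    hF_supp.comp_left (g := fun y => ‖y‖ ^ 2) (by simp)
  have hFull : Integrable (fun x : Fin (n' + 1) → ℝ => ‖F x‖ ^ 2) :=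
    hFsq_cont.integrable_of_hasCompactSupport hFsq_supp
  have hQ : Integrable (fun z : ℝ × (Fin n' → ℝ) => ‖F (e.symm z)‖ ^ 2)
      ((volume : Measure ℝ).prod volume) :=
    (MPsymm.integrable_comp_emb e.symm.measurableEmbedding).2 hFull
  set J : (Fin n' → ℝ) → ℝ :=
    fun y => ∫ s in Set.Ioc (-R) R, ‖F (Fin.insertNth en s y)‖ ^ 2 with hJ
  set K : (Fin n' → ℝ) → ℝ := fun y => ∫ a : ℝ, ‖F (Fin.insertNth en a y)‖ ^ 2 with hK
  have hKint : Integrable K := by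
    have h := hQ.swap.integral_prod_left
    simpa [hesymm] using h
  have hay_int : ∀ y, Integrable (fun a : ℝ => ‖F (Fin.insertNth en a y)‖ ^ 2) := by
    intro y
    apply Continuous.integrable_of_hasCompactSupport
    · exact (hF_cont.comp (continuous_id.finInsertNth en continuous_const)).norm.pow 2
    · apply HasCompactSupport.intro (hF_supp.image (continuous_apply en))
      intro a ha
      have hz : F (Fin.insertNth en a y) = 0 := by
        by_contra hne
        exact ha ⟨Fin.insertNth en a y, subset_tsupport F hne, by simp⟩
      simp [hz]
  have hJK : ∀ y, J y ≤ K y := fun y =>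
    setIntegral_le_integral (hay_int y) (Filter.Eventually.of_forall fun a => by positivity)
  have hJnonneg : ∀ y, 0 ≤ J y := fun y =>
    setIntegral_nonneg measurableSet_Ioc fun s _ => by positivity
  have hJc : Continuous J := by
    have h0 : Continuous fun p : (Fin n' → ℝ) × ℝ => ‖F (Fin.insertNth en p.2 p.1)‖ ^ 2 :=
      (hF_cont.comp (continuous_snd.finInsertNth en continuous_fst)).norm.pow 2
    have h1 := continuous_parametric_integral_of_continuous (μ := volume)
      (f := fun (y : Fin n' → ℝ) (s : ℝ) => ‖F (Fin.insertNth en s y)‖ ^ 2)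
      h0 (isCompact_Icc (a := -R) (b := R))
    have heq : J = fun y => ∫ s in Set.Icc (-R) R, ‖F (Fin.insertNth en s y)‖ ^ 2 := by
      funext y; rw [hJ]; exact integral_Icc_eq_integral_Ioc.symm
    rw [heq]; exact h1
  have hJint : Integrable J := by
    apply hKint.mono' hJc.aestronglyMeasurable
    refine Filter.Eventually.of_forall fun y => ?_
    rw [Real.norm_eq_abs, abs_of_nonneg (hJnonneg y)]
    exact hJK y
  have hupd : ∀ (a : ℝ) (y : Fin n' → ℝ) (s : ℝ),
      Function.update (Fin.insertNth (α := fun _ => ℝ) en a y) en s = Fin.insertNth en s y := by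
    intro a y s
    funext i
    rcases eq_or_ne i en with rfl | hne
    · simp
    · obtain ⟨j, rfl⟩ := Fin.exists_succAbove_eq hne
      rw [Function.update_of_ne hne, Fin.insertNth_apply_succAbove,
        Fin.insertNth_apply_succAbove]
  have hTJ : ∀ (a : ℝ) (y : Fin n' → ℝ), T (Fin.insertNth en a y) = J y := by
    intro a y
    rw [hT, hJ]
    simp_rw [hupd a y]
  have hSsplit : ∫ x in S, T x = (2 * R) * ∫ y, J y := by
    rw [← integral_indicator hS_meas, ← MPsymm.integral_comp' (S.indicator T)]
    have hQind : Integrable (fun z : ℝ × (Fin n' → ℝ) => S.indicator T (e.symm z))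
        ((volume : Measure ℝ).prod volume) := by
      have h2 : Integrable ((S.indicator T) ∘ ⇑e.symm) ((volume : Measure ℝ).prod volume) := by
        rw [MeasurePreserving.integrable_comp_emb MPsymm e.symm.measurableEmbedding,
          integrable_indicator_iff hS_meas]
        exact hTS
      exact h2
    rw [integral_prod _ hQind]
    have hin : ∀ (a : ℝ) (y : Fin n' → ℝ), S.indicator T (e.symm (a, y)) =
        Set.indicator (Set.Ioo (-R) R) (fun _ => J y) a := by
      intro a y
      rw [hesymm]
      by_cases ha : a ∈ Set.Ioo (-R) R
      · have hmem : Fin.insertNth en a y ∈ S := by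
          simp only [hS, Set.mem_preimage, Fin.insertNth_apply_same]
          exact ha
        rw [Set.indicator_of_mem hmem, Set.indicator_of_mem ha, hTJ]
      · have hmem : Fin.insertNth en a y ∉ S := by
          simp only [hS, Set.mem_preimage, Fin.insertNth_apply_same]
          exact ha
        rw [Set.indicator_of_notMem hmem, Set.indicator_of_notMem ha]
    simp_rw [hin]
    have hswap : ∀ a : ℝ, (∫ y : Fin n' → ℝ, Set.indicator (Set.Ioo (-R) R) (fun _ => J y) a)
        = Set.indicator (Set.Ioo (-R) R) (fun _ => ∫ y, J y) a := by
      intro a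
      by_cases ha : a ∈ Set.Ioo (-R) R <;>
        simp [Set.indicator_of_mem, Set.indicator_of_notMem, ha]
    simp_rw [hswap]
    rw [integral_indicator_const _ measurableSet_Ioo]
    rw [Real.volume_real_Ioo_of_le (by linarith : -R ≤ R)]
    simp only [smul_eq_mul]
    ring
  have hfull_eq : ∫ y, K y = ∫ x : Fin (n' + 1) → ℝ, ‖F x‖ ^ 2 := by
    have h1 : ∫ x : Fin (n' + 1) → ℝ, ‖F x‖ ^ 2
        = ∫ z, ‖F (e.symm z)‖ ^ 2 ∂((volume : Measure ℝ).prod volume) := by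
      rw [MPsymm.integral_comp' (fun x => ‖F x‖ ^ 2)]
    have h2 := integral_integral_swap
      (f := fun (a : ℝ) (y : Fin n' → ℝ) => ‖F (e.symm (a, y))‖ ^ 2) hQ
    rw [h1, integral_prod _ hQ]
    rw [h2]
    simp_rw [hesymm]
    rfl
  have hJle : ∫ y, J y ≤ ∫ x : Fin (n' + 1) → ℝ, ‖F x‖ ^ 2 := by
    rw [← hfull_eq]
    exact integral_mono hJint hKint hJK
  have hFnn : 0 ≤ ∫ x : Fin (n' + 1) → ℝ, ‖F x‖ ^ 2 :=
    integral_nonneg fun x => by positivity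
  have htotal : ∫ x in Ω, ‖v x‖ ^ 2
      ≤ (2 * R * Real.exp (2 * M * R)) ^ 2 * ∫ x : Fin (n' + 1) → ℝ, ‖F x‖ ^ 2 := by
    calc ∫ x in Ω, ‖v x‖ ^ 2 ≤ ∫ x in Ω, C * T x := step1
      _ ≤ ∫ x in S, C * T x := step2
      _ = C * ∫ x in S, T x := step3
      _ = C * ((2 * R) * ∫ y, J y) := by rw [hSsplit]
      _ ≤ C * ((2 * R) * ∫ x : Fin (n' + 1) → ℝ, ‖F x‖ ^ 2) := by
          apply mul_le_mul_of_nonneg_left (mul_le_mul_of_nonneg_left hJle (by linarith)) hC0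
      _ = (2 * R * Real.exp (2 * M * R)) ^ 2 * ∫ x : Fin (n' + 1) → ℝ, ‖F x‖ ^ 2 := by
          rw [hC]; ring
  calc Real.sqrt (∫ x in Ω, ‖v x‖ ^ 2)
      ≤ Real.sqrt ((2 * R * Real.exp (2 * M * R)) ^ 2 * ∫ x : Fin (n' + 1) → ℝ, ‖F x‖ ^ 2) :=
        Real.sqrt_le_sqrt htotal
    _ = 2 * R * Real.exp (2 * M * R) * Real.sqrt (∫ x : Fin (n' + 1) → ℝ, ‖F x‖ ^ 2) := by
        rw [Real.sqrt_mul (sq_nonneg _), Real.sqrt_sq (by positivity)]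
end
end
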